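/- Let R be a commutative ring and G a finite group whose order is invertible in R, acting on a commutative R-algebra B by R-algebra automorphisms; let A = B^G be the subalgebra of G-invariant elements. Then for every R-module N, the natural R-linear homomorphism N ⊗_R A → (N ⊗_R B)^G (induced by the inclusion A ⊆ B, where G acts on N ⊗_R B through its action on B) is an isomorphism. -/

import Mathlib

open scoped TensorProduct

/-- The subalgebra of `G`-invariant elements of an `R`-algebra `B` on which a
group `G` acts by `R`-algebra automorphisms. -/
def fixedSubalgebra (G R B : Type*) [Monoid G] [CommSemiring R] [Semiring B]
    [Algebra R B] [MulSemiringAction G B] [SMulCommClass G R B] :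
    Subalgebra R B where
  carrier := MulAction.fixedPoints G B
  mul_mem' := fun {x y} hx hy g => by
    rw [smul_mul', hx g, hy g]
  add_mem' := fun {x y} hx hy g => by
    rw [smul_add, hx g, hy g]
  algebraMap_mem' := fun r g => smul_algebraMap g r

/-- Let `G` be a finite group whose order is invertible in the commutative ring
`R`, acting on a commutative `R`-algebra `B` by `R`-algebra automorphisms, and let
`A = B^G`.  Then for every `R`-module `N`, the natural map
`N ⊗[R] A → (N ⊗[R] B)^G` is an isomorphism: the map `N ⊗[R] A → N ⊗[R] B`
induced by the inclusion `A ⊆ B` is injective, with image exactly the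
`G`-invariants of `N ⊗[R] B` (where `G` acts through `B`). -/
theorem stmt_13 {R : Type*} [CommRing R] (G : Type*) [Group G] [Finite G]
    (hord : IsUnit (Nat.card G : R))
    (B : Type*) [CommRing B] [Algebra R B] [MulSemiringAction G B]
    [SMulCommClass G R B]
    (N : Type*) [AddCommGroup N] [Module R N] :
    Function.Injective
      (LinearMap.lTensor N (fixedSubalgebra G R B).val.toLinearMap) ∧
    Set.range
      (LinearMap.lTensor N (fixedSubalgebra G R B).val.toLinearMap) =
      {x : N ⊗[R] B | ∀ g : G,
        LinearMap.lTensor N (DistribMulAction.toLinearMap R B g) x = x} := by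
  classical
  have : Fintype G := Fintype.ofFinite G
  set u := hord.unit with hu
  have hcard : (Nat.card G : R) = (u : R) := rfl
  set A := fixedSubalgebra G R B with hA
  set ι : ↥A →ₗ[R] B := A.val.toLinearMap with hι
  -- the averaging operator
  set avg : B →ₗ[R] B :=
    (↑u⁻¹ : R) • ∑ g : G, DistribMulAction.toLinearMap R B g with havg
  have havg_apply : ∀ b : B, avg b = (↑u⁻¹ : R) • ∑ g : G, g • b := by
    intro b
    simp [havg, LinearMap.sum_apply]
    rfl
  have havg_mem : ∀ b : B, avg b ∈ Subalgebra.toSubmodule A := by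
    intro b g
    show g • avg b = avg b
    rw [havg_apply, smul_comm g ((↑u⁻¹ : R)), Finset.smul_sum]
    congr 1
    exact Fintype.sum_equiv (Equiv.mulLeft g) (fun h => g • h • b)
      (fun h => h • b) (fun h => by simp [mul_smul])
  set proj : B →ₗ[R] ↥A := avg.codRestrict (Subalgebra.toSubmodule A) havg_mem
    with hproj
  have hcardG : (Fintype.card G : R) = (u : R) := by
    rw [← hcard, Nat.card_eq_fintype_card]
  -- proj is a retraction of ι
  have hretr : proj.comp ι = LinearMap.id := by
    ext a
    have ha : ∀ g : G, g • (a : B) = (a : B) := a.2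
    have key : avg (a : B) = (a : B) := by
      rw [havg_apply]
      simp only [ha]
      rw [Finset.sum_const, Finset.card_univ, ← Nat.cast_smul_eq_nsmul R, hcardG,
        ← mul_smul, Units.inv_mul, one_smul]
    exact key
  have hTretr : (LinearMap.lTensor N proj).comp (LinearMap.lTensor N ι) =
      LinearMap.id := by
    rw [← LinearMap.lTensor_comp, hretr, LinearMap.lTensor_id]
  have hinj : Function.Injective (LinearMap.lTensor N ι) := by
    intro x y hxy
    have := congrArg (LinearMap.lTensor N proj) hxy
    simpa [← LinearMap.comp_apply, hTretr] using this
  refine ⟨hinj, ?_⟩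
  ext x
  constructor
  · rintro ⟨y, rfl⟩ g
    have hcomp : (DistribMulAction.toLinearMap R B g).comp ι = ι := by
      ext a
      exact a.2 g
    rw [← LinearMap.comp_apply, ← LinearMap.lTensor_comp, hcomp]
  · intro hx
    refine ⟨LinearMap.lTensor N proj x, ?_⟩
    have hιproj : ι.comp proj = avg := rfl
    rw [← LinearMap.comp_apply, ← LinearMap.lTensor_comp, hιproj, havg,
      LinearMap.lTensor_smul]
    have hsum : (∑ g : G, DistribMulAction.toLinearMap R B g).lTensor N =
        ∑ g : G, (DistribMulAction.toLinearMap R B g).lTensor N :=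
      map_sum (LinearMap.lTensorHom N) _ _
    rw [LinearMap.smul_apply, hsum, LinearMap.sum_apply]
    have hfix : ∑ g : G, (DistribMulAction.toLinearMap R B g).lTensor N x
        = ∑ _g : G, x := Finset.sum_congr rfl fun g _ => hx g
    rw [hfix, Finset.sum_const, Finset.card_univ, ← Nat.cast_smul_eq_nsmul R, hcardG,
      ← mul_smul, Units.inv_mul, one_smul]
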